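/- arXiv:1907.05520 — 4 statements merged into one kernel-verified Lean document; each statement's English description precedes it below -/
import Mathlib

section
/- Let X ∈ ℝ^{N×N} be symmetric positive semidefinite of rank r with eigenvalues λ₁ ≥ ⋯ ≥ λ_r > 0, let 1 ≤ k ≤ r, let W_k, Λ_k, U* = W_k Λ_k^{1/2} be as usual, and set L = ‖U*U*ᵀ‖_F. Let B₁,…,B_M ∈ ℝ^{N×N}, set A_m = (B_m + B_mᵀ)/2, and suppose that for every Z ∈ ℝ^{N×N} with rank(Z) ≤ r+k one has (1−δ)‖Z‖_F² ≤ Σ_{m=1}^M ⟨B_m, Z⟩² ≤ (1+δ)‖Z‖_F². Let η > 0 and suppose δ ≤ η / (2((16/7)√k L + (8/7)L + ‖X‖_F)). Then for every U ∈ ℝ^{N×k} with full column rank and ‖UUᵀ‖_F ≤ (8/7)L, and every D ∈ ℝ^{N×k} with ‖D‖_F = 1, one has |(1/2)Σ_{m=1}^M ⟨A_m, UDᵀ + DUᵀ⟩² + ⟨Σ_{m=1}^M ⟨A_m, UUᵀ − X⟩ A_m, DDᵀ⟩ − (1/2)‖UDᵀ + DUᵀ‖_F² − ⟨UUᵀ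 − X, DDᵀ⟩| ≤ η/2. -/
open Matrix

/-- Frobenius norm of a real matrix. -/
noncomputable def frob {m n : Type*} [Fintype m] [Fintype n] (M : Matrix m n ℝ) : ℝ :=
  Real.sqrt (∑ i, ∑ j, (M i j) ^ 2)

/-- Trace (entrywise) inner product of two real matrices. -/
noncomputable def mip {m n : Type*} [Fintype m] [Fintype n] (A B : Matrix m n ℝ) : ℝ :=
  ∑ i, ∑ j, A i j * B i j

section helpers
variable {m n p q : Type*} [Fintype m] [Fintype n] [Fintype p] [Fintype q]

lemma frob_nonneg (M : Matrix m n ℝ) : 0 ≤ frob M := Real.sqrt_nonneg _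

lemma frob_sq (M : Matrix m n ℝ) : frob M ^ 2 = ∑ i, ∑ j, (M i j) ^ 2 :=
  Real.sq_sqrt (by positivity)

lemma mip_self (M : Matrix m n ℝ) : mip M M = frob M ^ 2 := by
  rw [frob_sq]; unfold mip; simp [sq]

lemma mip_comm (P Q : Matrix m n ℝ) : mip P Q = mip Q P := by
  unfold mip; simp [mul_comm]

lemma mip_add_right (P Q R : Matrix m n ℝ) : mip P (Q + R) = mip P Q + mip P R := by
  unfold mip; simp [Matrix.add_apply, mul_add, Finset.sum_add_distrib]

lemma mip_add_left (P Q R : Matrix m n ℝ) : mip (P + Q) R = mip P R + mip Q R := by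
  rw [mip_comm, mip_add_right, mip_comm R P, mip_comm R Q]

lemma mip_smul_right (c : ℝ) (P Q : Matrix m n ℝ) : mip P (c • Q) = c * mip P Q := by
  unfold mip; simp [Matrix.smul_apply, smul_eq_mul, Finset.mul_sum, mul_left_comm]

lemma mip_smul_left (c : ℝ) (P Q : Matrix m n ℝ) : mip (c • P) Q = c * mip P Q := by
  rw [mip_comm, mip_smul_right, mip_comm]

lemma mip_sub_right (P Q R : Matrix m n ℝ) : mip P (Q - R) = mip P Q - mip P R := by
  have h : Q - R = Q + (-1 : ℝ) • R := by rw [neg_one_smul, ← sub_eq_add_neg]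
  rw [h, mip_add_right, mip_smul_right]; ring

lemma mip_sub_left (P Q R : Matrix m n ℝ) : mip (P - Q) R = mip P R - mip Q R := by
  rw [mip_comm, mip_sub_right, mip_comm R P, mip_comm R Q]

lemma mip_sum_left {ι : Type*} (s : Finset ι) (f : ι → Matrix m n ℝ) (P : Matrix m n ℝ) :
    mip (∑ t ∈ s, f t) P = ∑ t ∈ s, mip (f t) P := by
  classical
  induction s using Finset.induction with
  | empty => unfold mip; simp
  | insert a s h ih => rw [Finset.sum_insert h, mip_add_left, ih, Finset.sum_insert h]

lemma mip_transpose_left (P : Matrix n m ℝ) (Q : Matrix m n ℝ) : mip Pᵀ Q = mip P Qᵀ := by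
  unfold mip; rw [Finset.sum_comm]; simp [Matrix.transpose_apply]

lemma frob_eq_zero {P : Matrix m n ℝ} (h : frob P = 0) : P = 0 := by
  have hs : (∑ i, ∑ j, (P i j) ^ 2) = 0 := by
    have h0 : (∑ i, ∑ j, (P i j) ^ 2) ≤ 0 := Real.sqrt_eq_zero'.mp h
    have h1 : (0:ℝ) ≤ ∑ i, ∑ j, (P i j) ^ 2 := by positivity
    linarith
  ext i j
  have h1 : ∀ i ∈ Finset.univ, (0:ℝ) ≤ ∑ j, (P i j)^2 := fun i _ => by positivity
  have h2 := (Finset.sum_eq_zero_iff_of_nonneg h1).mp hs i (Finset.mem_univ i)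
  have h3 := (Finset.sum_eq_zero_iff_of_nonneg (fun j _ => sq_nonneg (P i j))).mp h2 j
    (Finset.mem_univ j)
  simpa using pow_eq_zero_iff (n := 2) (by norm_num) |>.mp h3

lemma mip_le_frob (P Q : Matrix m n ℝ) : mip P Q ≤ frob P * frob Q := by
  have h := Finset.sum_mul_sq_le_sq_mul_sq Finset.univ
    (fun t : m × n => P t.1 t.2) (fun t : m × n => Q t.1 t.2)
  have e1 : mip P Q = ∑ t : m × n, P t.1 t.2 * Q t.1 t.2 := by
    unfold mip; rw [← Finset.sum_product', Finset.univ_product_univ]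
  have e2 : frob P ^ 2 = ∑ t : m × n, (P t.1 t.2) ^ 2 := by
    rw [frob_sq, ← Finset.sum_product', Finset.univ_product_univ]
  have e3 : frob Q ^ 2 = ∑ t : m × n, (Q t.1 t.2) ^ 2 := by
    rw [frob_sq, ← Finset.sum_product', Finset.univ_product_univ]
  have h2 : mip P Q ^ 2 ≤ (frob P * frob Q) ^ 2 := by
    rw [e1, mul_pow, e2, e3]; exact h
  have hf : 0 ≤ frob P * frob Q := mul_nonneg (frob_nonneg _) (frob_nonneg _)
  nlinarith [sq_nonneg (mip P Q - frob P * frob Q), sq_nonneg (mip P Q + frob P * frob Q)]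

lemma frob_add_le (P Q : Matrix m n ℝ) : frob (P + Q) ≤ frob P + frob Q := by
  have key : frob (P + Q) ^ 2 ≤ (frob P + frob Q) ^ 2 := by
    have e : frob (P + Q) ^ 2 = frob P ^ 2 + 2 * mip P Q + frob Q ^ 2 := by
      rw [frob_sq, frob_sq, frob_sq]
      unfold mip
      have he : ∀ i j, ((P + Q) i j) ^ 2 = P i j ^ 2 + 2 * (P i j * Q i j) + Q i j ^ 2 :=
        fun i j => by simp [Matrix.add_apply]; ring
      simp only [he, Finset.sum_add_distrib, Finset.mul_sum]
    have := mip_le_frob P Q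
    nlinarith
  have h0 : 0 ≤ frob (P + Q) := frob_nonneg _
  have h1 : 0 ≤ frob P + frob Q := add_nonneg (frob_nonneg _) (frob_nonneg _)
  nlinarith

lemma frob_mul_transpose_le (P : Matrix m q ℝ) (Q : Matrix n q ℝ) :
    frob (P * Qᵀ) ≤ frob P * frob Q := by
  have key : frob (P * Qᵀ) ^ 2 ≤ (frob P * frob Q) ^ 2 := by
    rw [frob_sq, mul_pow, frob_sq, frob_sq]
    have hstep : ∀ i j, ((P * Qᵀ) i j) ^ 2 ≤ (∑ l, (P i l) ^ 2) * (∑ l, (Q j l) ^ 2) := by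
      intro i j
      have := Finset.sum_mul_sq_le_sq_mul_sq Finset.univ (fun l => P i l) (fun l => Q j l)
      simpa [Matrix.mul_apply, Matrix.transpose_apply] using this
    calc ∑ i, ∑ j, ((P * Qᵀ) i j) ^ 2
        ≤ ∑ i, ∑ j, (∑ l, (P i l) ^ 2) * (∑ l, (Q j l) ^ 2) :=
          Finset.sum_le_sum fun i _ => Finset.sum_le_sum fun j _ => hstep i j
      _ = (∑ i, ∑ l, (P i l) ^ 2) * (∑ j, ∑ l, (Q j l) ^ 2) := by
          simp_rw [← Finset.mul_sum]; rw [← Finset.sum_mul]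
  have h0 : 0 ≤ frob (P * Qᵀ) := frob_nonneg _
  have h1 : 0 ≤ frob P * frob Q := mul_nonneg (frob_nonneg _) (frob_nonneg _)
  nlinarith

lemma frob_sq_eq_trace (M : Matrix m n ℝ) : frob M ^ 2 = Matrix.trace (M * Mᵀ) := by
  rw [frob_sq]
  simp [Matrix.trace, Matrix.mul_apply, Matrix.diag, sq]

lemma frob_sq_le_sqrt_card (U : Matrix m q ℝ) :
    frob U ^ 2 ≤ Real.sqrt (Fintype.card q) * frob (U * Uᵀ) := by
  classical
  set G := Uᵀ * U with hG
  have hGsym : Gᵀ = G := by rw [hG]; simp [Matrix.transpose_mul]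
  have h1 : frob U ^ 2 = ∑ l, G l l := by
    rw [frob_sq, Finset.sum_comm]
    simp [hG, Matrix.mul_apply, Matrix.transpose_apply, sq]
  have h2 : (∑ l, G l l) ^ 2 ≤ (Fintype.card q : ℝ) * ∑ l, (G l l) ^ 2 := by
    have := sq_sum_le_card_mul_sum_sq (s := (Finset.univ : Finset q)) (f := fun l => G l l)
    simpa using this
  have h3 : ∑ l, (G l l) ^ 2 ≤ frob G ^ 2 := by
    rw [frob_sq]
    apply Finset.sum_le_sum
    intro l _
    exact Finset.single_le_sum (fun j _ => sq_nonneg (G l j)) (Finset.mem_univ l)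
  have h4 : frob G ^ 2 = frob (U * Uᵀ) ^ 2 := by
    rw [frob_sq_eq_trace, frob_sq_eq_trace, hGsym]
    rw [Matrix.transpose_mul, Matrix.transpose_transpose, hG]
    simp only [Matrix.mul_assoc]
    rw [Matrix.trace_mul_comm]
    simp only [Matrix.mul_assoc]
  have h5 : (frob U ^ 2) ^ 2 ≤ (Fintype.card q : ℝ) * frob (U * Uᵀ) ^ 2 := by
    rw [h1]
    calc (∑ l, G l l) ^ 2 ≤ (Fintype.card q : ℝ) * ∑ l, (G l l) ^ 2 := h2
      _ ≤ (Fintype.card q : ℝ) * frob (U * Uᵀ) ^ 2 := by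
          apply mul_le_mul_of_nonneg_left _ (by positivity)
          rw [← h4]; exact h3
  have h6 : frob U ^ 2 = Real.sqrt ((frob U ^ 2) ^ 2) := by
    rw [Real.sqrt_sq (by positivity)]
  rw [h6]
  calc Real.sqrt ((frob U ^ 2) ^ 2) ≤ Real.sqrt ((Fintype.card q : ℝ) * frob (U * Uᵀ) ^ 2) :=
        Real.sqrt_le_sqrt h5
    _ = Real.sqrt (Fintype.card q) * frob (U * Uᵀ) := by
        rw [Real.sqrt_mul (by positivity), Real.sqrt_sq (frob_nonneg _)]

omit [Fintype m] in
lemma matrix_rank_add_le' (P Q : Matrix p q ℝ) : (P + Q).rank ≤ P.rank + Q.rank := by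
  classical
  unfold Matrix.rank
  rw [Matrix.mulVecLin_add]
  have h : LinearMap.range (P.mulVecLin + Q.mulVecLin) ≤
      LinearMap.range P.mulVecLin ⊔ LinearMap.range Q.mulVecLin := by
    rintro x ⟨v, rfl⟩
    exact Submodule.mem_sup.2 ⟨P.mulVecLin v, ⟨v, rfl⟩, Q.mulVecLin v, ⟨v, rfl⟩, rfl⟩
  calc Module.finrank ℝ (LinearMap.range (P.mulVecLin + Q.mulVecLin))
      ≤ Module.finrank ℝ
        (LinearMap.range P.mulVecLin ⊔ LinearMap.range Q.mulVecLin : Submodule ℝ (p → ℝ)) :=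
        Submodule.finrank_mono h
    _ ≤ _ := Submodule.finrank_add_le_finrank_add_finrank _ _

omit [Fintype m] in
lemma matrix_rank_smul_le' (c : ℝ) (P : Matrix p q ℝ) : (c • P).rank ≤ P.rank := by
  classical
  unfold Matrix.rank
  apply Submodule.finrank_mono
  rintro x ⟨v, rfl⟩
  refine ⟨c • v, ?_⟩
  simp [Matrix.mulVecLin_apply, Matrix.mulVec_smul, Matrix.smul_mulVec]

end helpers

lemma rip_abs_aux {N M rk : ℕ} (B : Fin M → Matrix (Fin N) (Fin N) ℝ) (δ : ℝ)
    (hRIP : ∀ Z : Matrix (Fin N) (Fin N) ℝ, Z.rank ≤ rk →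
      (1 - δ) * frob Z ^ 2 ≤ ∑ m, mip (B m) Z ^ 2 ∧
      ∑ m, mip (B m) Z ^ 2 ≤ (1 + δ) * frob Z ^ 2)
    (Z : Matrix (Fin N) (Fin N) ℝ) (hZ : Z.rank ≤ rk) :
    |∑ m, mip (B m) Z ^ 2 - frob Z ^ 2| ≤ δ * frob Z ^ 2 := by
  obtain ⟨h1, h2⟩ := hRIP Z hZ
  rw [abs_le]
  constructor <;> nlinarith

lemma prod_bound_aux {N M rk : ℕ} (B : Fin M → Matrix (Fin N) (Fin N) ℝ) (δ : ℝ)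
    (hRIP : ∀ Z : Matrix (Fin N) (Fin N) ℝ, Z.rank ≤ rk →
      (1 - δ) * frob Z ^ 2 ≤ ∑ m, mip (B m) Z ^ 2 ∧
      ∑ m, mip (B m) Z ^ 2 ≤ (1 + δ) * frob Z ^ 2)
    (Z₁ Z₂ : Matrix (Fin N) (Fin N) ℝ)
    (hr : ∀ c d : ℝ, (c • Z₁ + d • Z₂).rank ≤ rk) :
    |∑ m, mip (B m) Z₁ * mip (B m) Z₂ - mip Z₁ Z₂| ≤ δ * (frob Z₁ * frob Z₂) := by
  by_cases h1 : frob Z₁ = 0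
  · have hz : Z₁ = 0 := frob_eq_zero h1
    have hm : ∀ mm : Fin M, mip (B mm) Z₁ = 0 := fun mm => by
      rw [hz]; unfold mip; simp
    have hm2 : mip Z₁ Z₂ = 0 := by rw [hz]; unfold mip; simp
    simp [hm, hm2, h1]
  by_cases h2 : frob Z₂ = 0
  · have hz : Z₂ = 0 := frob_eq_zero h2
    have hm : ∀ mm : Fin M, mip (B mm) Z₂ = 0 := fun mm => by
      rw [hz]; unfold mip; simp
    have hm2 : mip Z₁ Z₂ = 0 := by rw [hz]; unfold mip; simp
    simp [hm, hm2, h2]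
  have hf1 : 0 < frob Z₁ := lt_of_le_of_ne (frob_nonneg _) (Ne.symm h1)
  have hf2 : 0 < frob Z₂ := lt_of_le_of_ne (frob_nonneg _) (Ne.symm h2)
  set t : ℝ := Real.sqrt (frob Z₂ / frob Z₁) with ht
  have ht0 : 0 < t := Real.sqrt_pos.2 (div_pos hf2 hf1)
  have ht2 : t ^ 2 = frob Z₂ / frob Z₁ := Real.sq_sqrt (le_of_lt (div_pos hf2 hf1))
  have ht2' : (t⁻¹) ^ 2 = frob Z₁ / frob Z₂ := by
    rw [inv_pow, ht2, inv_div]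
  have htinv : t * t⁻¹ = 1 := mul_inv_cancel₀ (ne_of_gt ht0)
  have expand : ∀ a b : ℝ, frob (a • Z₁ + b • Z₂) ^ 2 =
      a ^ 2 * frob Z₁ ^ 2 + 2 * a * b * mip Z₁ Z₂ + b ^ 2 * frob Z₂ ^ 2 := by
    intro a b
    rw [← mip_self]
    simp only [mip_add_left, mip_add_right, mip_smul_left, mip_smul_right]
    rw [mip_self, mip_self, mip_comm Z₂ Z₁]
    ring
  have e1 : ∑ m, mip (B m) (t • Z₁ + t⁻¹ • Z₂) ^ 2
      - ∑ m, mip (B m) (t • Z₁ + (-t⁻¹) • Z₂) ^ 2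
      = 4 * ∑ m, mip (B m) Z₁ * mip (B m) Z₂ := by
    rw [← Finset.sum_sub_distrib, Finset.mul_sum]
    apply Finset.sum_congr rfl
    intro mm _
    simp only [mip_add_right, mip_smul_right]
    linear_combination (4 * mip (B mm) Z₁ * mip (B mm) Z₂) * htinv
  have e2 : frob (t • Z₁ + t⁻¹ • Z₂) ^ 2 - frob (t • Z₁ + (-t⁻¹) • Z₂) ^ 2
      = 4 * mip Z₁ Z₂ := by
    rw [expand t t⁻¹, expand t (-t⁻¹)]
    linear_combination (4 * mip Z₁ Z₂) * htinv
  have sum_id : ∑ m, mip (B m) Z₁ * mip (B m) Z₂ - mip Z₁ Z₂ =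
      (1/4) * ((∑ m, mip (B m) (t • Z₁ + t⁻¹ • Z₂) ^ 2 - frob (t • Z₁ + t⁻¹ • Z₂) ^ 2)
        - (∑ m, mip (B m) (t • Z₁ + (-t⁻¹) • Z₂) ^ 2
          - frob (t • Z₁ + (-t⁻¹) • Z₂) ^ 2)) := by
    linarith [e1, e2]
  rw [sum_id]
  have hP := rip_abs_aux B δ hRIP (t • Z₁ + t⁻¹ • Z₂) (hr t t⁻¹)
  have hQ := rip_abs_aux B δ hRIP (t • Z₁ + (-t⁻¹) • Z₂) (hr t (-t⁻¹))
  have habs : |(1/4 : ℝ) * ((∑ m, mip (B m) (t • Z₁ + t⁻¹ • Z₂) ^ 2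
      - frob (t • Z₁ + t⁻¹ • Z₂) ^ 2)
      - (∑ m, mip (B m) (t • Z₁ + (-t⁻¹) • Z₂) ^ 2 - frob (t • Z₁ + (-t⁻¹) • Z₂) ^ 2))|
      ≤ (1/4) * (δ * frob (t • Z₁ + t⁻¹ • Z₂) ^ 2 + δ * frob (t • Z₁ + (-t⁻¹) • Z₂) ^ 2) := by
    rw [abs_mul]
    rw [abs_of_pos (by norm_num : (0:ℝ) < 1/4)]
    have := abs_sub (∑ m, mip (B m) (t • Z₁ + t⁻¹ • Z₂) ^ 2 - frob (t • Z₁ + t⁻¹ • Z₂) ^ 2)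
      (∑ m, mip (B m) (t • Z₁ + (-t⁻¹) • Z₂) ^ 2 - frob (t • Z₁ + (-t⁻¹) • Z₂) ^ 2)
    linarith
  have hfinal : (1/4 : ℝ) * (δ * frob (t • Z₁ + t⁻¹ • Z₂) ^ 2
      + δ * frob (t • Z₁ + (-t⁻¹) • Z₂) ^ 2) = δ * (frob Z₁ * frob Z₂) := by
    rw [expand t t⁻¹, expand t (-t⁻¹)]
    have hq1 : t ^ 2 * frob Z₁ ^ 2 = frob Z₂ * frob Z₁ := by
      rw [ht2]; field_simp
    have hq2 : (t⁻¹) ^ 2 * frob Z₂ ^ 2 = frob Z₁ * frob Z₂ := by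
      rw [ht2']; field_simp
    linear_combination (δ/2) * hq1 + (δ/2) * hq2
  exact habs.trans (le_of_eq hfinal)

set_option maxHeartbeats 2000000 in
theorem stmt_14 {N r k M : ℕ} (hk1 : 1 ≤ k) (hkr : k ≤ r)
    (W : Matrix (Fin N) (Fin r) ℝ) (lam : Fin r → ℝ)
    (hW : Wᵀ * W = 1) (hpos : ∀ i, 0 < lam i)
    (hdesc : ∀ i j : Fin r, i ≤ j → lam j ≤ lam i)
    (X : Matrix (Fin N) (Fin N) ℝ) (hX : X = W * diagonal lam * Wᵀ)
    (Ustar : Matrix (Fin N) (Fin k) ℝ)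
    (hUstar : Ustar = W.submatrix id (Fin.castLE hkr) *
      diagonal (fun j : Fin k => Real.sqrt (lam (Fin.castLE hkr j))))
    (L : ℝ) (hL : L = frob (Ustar * Ustarᵀ))
    (B A : Fin M → Matrix (Fin N) (Fin N) ℝ)
    (hA : ∀ m, A m = ((1 : ℝ) / 2) • (B m + (B m)ᵀ))
    (δ η : ℝ) (hη : 0 < η)
    (hRIP : ∀ Z : Matrix (Fin N) (Fin N) ℝ, Z.rank ≤ r + k →
      (1 - δ) * frob Z ^ 2 ≤ ∑ m, mip (B m) Z ^ 2 ∧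
      ∑ m, mip (B m) Z ^ 2 ≤ (1 + δ) * frob Z ^ 2)
    (hδ : δ ≤ η / (2 * ((16 / 7) * Real.sqrt k * L + (8 / 7) * L + frob X))) :
    ∀ U : Matrix (Fin N) (Fin k) ℝ, U.rank = k → frob (U * Uᵀ) ≤ (8 / 7) * L →
      ∀ D : Matrix (Fin N) (Fin k) ℝ, frob D = 1 →
      |(1 / 2) * (∑ m, mip (A m) (U * Dᵀ + D * Uᵀ) ^ 2) +
          mip (∑ m, mip (A m) (U * Uᵀ - X) • A m) (D * Dᵀ) -
          (1 / 2) * frob (U * Dᵀ + D * Uᵀ) ^ 2 - mip (U * Uᵀ - X) (D * Dᵀ)| ≤ η / 2 := by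
  intro U hrkU hUb D hD
  -- basic symmetry facts
  have hXsym : Xᵀ = X := by
    rw [hX]; simp [Matrix.transpose_mul, Matrix.diagonal_transpose, Matrix.mul_assoc]
  have hSsym : (U * Dᵀ + D * Uᵀ)ᵀ = U * Dᵀ + D * Uᵀ := by
    rw [Matrix.transpose_add, Matrix.transpose_mul, Matrix.transpose_mul,
      Matrix.transpose_transpose, Matrix.transpose_transpose, add_comm]
  have hUUsym : (U * Uᵀ)ᵀ = U * Uᵀ := by
    rw [Matrix.transpose_mul, Matrix.transpose_transpose]
  have hDDsym : (D * Dᵀ)ᵀ = D * Dᵀ := by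
    rw [Matrix.transpose_mul, Matrix.transpose_transpose]
  have hEsym : (U * Uᵀ - X)ᵀ = U * Uᵀ - X := by
    rw [Matrix.transpose_sub, hUUsym, hXsym]
  -- A vs B on symmetric matrices
  have mipAB : ∀ (mm : Fin M) (Z : Matrix (Fin N) (Fin N) ℝ), Zᵀ = Z →
      mip (A mm) Z = mip (B mm) Z := by
    intro mm Z hsym
    rw [hA mm, mip_smul_left, mip_add_left, mip_transpose_left, hsym]
    ring
  have rip_abs : ∀ Z : Matrix (Fin N) (Fin N) ℝ, Z.rank ≤ r + k →
      |∑ m, mip (B m) Z ^ 2 - frob Z ^ 2| ≤ δ * frob Z ^ 2 :=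
    fun Z hZ => rip_abs_aux B δ hRIP Z hZ
  -- rank of X
  have hrankX : X.rank ≤ r := by
    rw [hX]
    calc (W * diagonal lam * Wᵀ).rank ≤ (W * diagonal lam).rank := Matrix.rank_mul_le_left _ _
      _ ≤ Fintype.card (Fin r) := Matrix.rank_le_card_width _
      _ = r := Fintype.card_fin r
  -- X is nonzero, hence frob X > 0
  have hr1 : 0 < r := lt_of_lt_of_le hk1 hkr
  have hXne : X ≠ 0 := by
    intro h0
    have e : Wᵀ * X * W = diagonal lam := by
      rw [hX]
      calc Wᵀ * (W * diagonal lam * Wᵀ) * W = (Wᵀ * W) * diagonal lam * (Wᵀ * W) := by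
            simp only [Matrix.mul_assoc]
        _ = diagonal lam := by rw [hW]; simp
    rw [h0] at e
    simp only [Matrix.mul_zero, Matrix.zero_mul] at e
    have := congrArg (fun Mx : Matrix (Fin r) (Fin r) ℝ => Mx ⟨0, hr1⟩ ⟨0, hr1⟩) e
    simp only [Matrix.zero_apply, Matrix.diagonal_apply_eq] at this
    exact absurd this.symm (ne_of_gt (hpos ⟨0, hr1⟩))
  have hfX : 0 < frob X := by
    rcases lt_or_eq_of_le (frob_nonneg X) with h | h
    · exact h
    · exact absurd (frob_eq_zero h.symm) hXne
  -- δ is nonnegative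
  have hδ0 : 0 ≤ δ := by
    obtain ⟨h1, h2⟩ := hRIP X (hrankX.trans (Nat.le_add_right r k))
    nlinarith [pow_pos hfX 2]
  have prod_bound : ∀ Z₁ Z₂ : Matrix (Fin N) (Fin N) ℝ,
      (∀ c d : ℝ, (c • Z₁ + d • Z₂).rank ≤ r + k) →
      |∑ m, mip (B m) Z₁ * mip (B m) Z₂ - mip Z₁ Z₂| ≤ δ * (frob Z₁ * frob Z₂) :=
    fun Z₁ Z₂ hr => prod_bound_aux B δ hRIP Z₁ Z₂ hr
  -- generic rank bound for sums of rank-k products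
  have rk_gen : ∀ V1 V2 V3 V4 : Matrix (Fin N) (Fin k) ℝ,
      (V1 * V2ᵀ + V3 * V4ᵀ).rank ≤ r + k := by
    intro V1 V2 V3 V4
    calc (V1 * V2ᵀ + V3 * V4ᵀ).rank ≤ (V1 * V2ᵀ).rank + (V3 * V4ᵀ).rank :=
          matrix_rank_add_le' _ _
      _ ≤ k + k := by
          apply add_le_add
          · exact (Matrix.rank_mul_le_left _ _).trans
              (by simpa using Matrix.rank_le_card_width V1)
          · exact (Matrix.rank_mul_le_left _ _).trans
              (by simpa using Matrix.rank_le_card_width V3)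
      _ ≤ r + k := by omega
  have hrkS : (U * Dᵀ + D * Uᵀ).rank ≤ r + k := rk_gen U D D U
  have hrk1 : ∀ c d : ℝ, (c • (U * Uᵀ) + d • (D * Dᵀ)).rank ≤ r + k := by
    intro c d
    rw [← Matrix.smul_mul, ← Matrix.smul_mul]
    exact rk_gen (c • U) U (d • D) D
  have hrk2 : ∀ c d : ℝ, (c • X + d • (D * Dᵀ)).rank ≤ r + k := by
    intro c d
    calc (c • X + d • (D * Dᵀ)).rank ≤ (c • X).rank + (d • (D * Dᵀ)).rank :=
          matrix_rank_add_le' _ _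
      _ ≤ X.rank + (D * Dᵀ).rank :=
          add_le_add (matrix_rank_smul_le' _ _) (matrix_rank_smul_le' _ _)
      _ ≤ r + k := by
          apply add_le_add hrankX
          exact (Matrix.rank_mul_le_left _ _).trans
            (by simpa using Matrix.rank_le_card_width D)
  -- frobenius norm facts
  have hL0 : 0 ≤ L := hL ▸ frob_nonneg _
  have hfS : frob (U * Dᵀ + D * Uᵀ) ≤ 2 * frob U := by
    calc frob (U * Dᵀ + D * Uᵀ) ≤ frob (U * Dᵀ) + frob (D * Uᵀ) := frob_add_le _ _
      _ ≤ frob U * frob D + frob D * frob U :=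
          add_le_add (frob_mul_transpose_le U D) (frob_mul_transpose_le D U)
      _ = 2 * frob U := by rw [hD]; ring
  have hU2 : frob U ^ 2 ≤ Real.sqrt k * ((8/7) * L) := by
    calc frob U ^ 2 ≤ Real.sqrt (Fintype.card (Fin k)) * frob (U * Uᵀ) :=
        frob_sq_le_sqrt_card U
      _ ≤ Real.sqrt k * ((8/7) * L) := by
          rw [Fintype.card_fin]
          exact mul_le_mul_of_nonneg_left hUb (Real.sqrt_nonneg _)
  have hDD1 : frob (D * Dᵀ) ≤ 1 := by
    calc frob (D * Dᵀ) ≤ frob D * frob D := frob_mul_transpose_le D D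
      _ = 1 := by rw [hD]; ring
  -- the three deviation bounds
  have bound1 : |∑ m, mip (B m) (U * Dᵀ + D * Uᵀ) ^ 2 - frob (U * Dᵀ + D * Uᵀ) ^ 2|
      ≤ δ * ((32/7) * (Real.sqrt k * L)) := by
    have h := rip_abs _ hrkS
    have hs2 : frob (U * Dᵀ + D * Uᵀ) ^ 2 ≤ (32/7) * (Real.sqrt k * L) := by
      have h4 : frob (U * Dᵀ + D * Uᵀ) ^ 2 ≤ (2 * frob U) ^ 2 :=
        pow_le_pow_left₀ (frob_nonneg _) hfS 2
      have h5 : (2 * frob U) ^ 2 = 4 * frob U ^ 2 := by ring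
      linarith [hU2]
    calc |∑ m, mip (B m) (U * Dᵀ + D * Uᵀ) ^ 2 - frob (U * Dᵀ + D * Uᵀ) ^ 2|
        ≤ δ * frob (U * Dᵀ + D * Uᵀ) ^ 2 := h
      _ ≤ δ * ((32/7) * (Real.sqrt k * L)) := mul_le_mul_of_nonneg_left hs2 hδ0
  have bound2 : |∑ m, mip (B m) (U * Uᵀ) * mip (B m) (D * Dᵀ) - mip (U * Uᵀ) (D * Dᵀ)|
      ≤ δ * ((8/7) * L) := by
    have h := prod_bound (U * Uᵀ) (D * Dᵀ) hrk1
    have : frob (U * Uᵀ) * frob (D * Dᵀ) ≤ (8/7) * L := by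
      calc frob (U * Uᵀ) * frob (D * Dᵀ) ≤ ((8/7) * L) * 1 :=
            mul_le_mul hUb hDD1 (frob_nonneg _) (by linarith)
        _ = (8/7) * L := mul_one _
    calc |∑ m, mip (B m) (U * Uᵀ) * mip (B m) (D * Dᵀ) - mip (U * Uᵀ) (D * Dᵀ)|
        ≤ δ * (frob (U * Uᵀ) * frob (D * Dᵀ)) := h
      _ ≤ δ * ((8/7) * L) := mul_le_mul_of_nonneg_left this hδ0
  have bound3 : |∑ m, mip (B m) X * mip (B m) (D * Dᵀ) - mip X (D * Dᵀ)|
      ≤ δ * frob X := by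
    have h := prod_bound X (D * Dᵀ) hrk2
    have : frob X * frob (D * Dᵀ) ≤ frob X := by
      calc frob X * frob (D * Dᵀ) ≤ frob X * 1 :=
            mul_le_mul_of_nonneg_left hDD1 (frob_nonneg X)
        _ = frob X := mul_one _
    calc |∑ m, mip (B m) X * mip (B m) (D * Dᵀ) - mip X (D * Dᵀ)|
        ≤ δ * (frob X * frob (D * Dᵀ)) := h
      _ ≤ δ * frob X := mul_le_mul_of_nonneg_left this hδ0
  -- rewrite the goal expression
  have eA : (∑ m, mip (A m) (U * Dᵀ + D * Uᵀ) ^ 2)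
      = ∑ m, mip (B m) (U * Dᵀ + D * Uᵀ) ^ 2 :=
    Finset.sum_congr rfl fun mm _ => by rw [mipAB mm _ hSsym]
  have eSec : mip (∑ m, mip (A m) (U * Uᵀ - X) • A m) (D * Dᵀ)
      = ∑ m, mip (B m) (U * Uᵀ) * mip (B m) (D * Dᵀ)
        - ∑ m, mip (B m) X * mip (B m) (D * Dᵀ) := by
    rw [mip_sum_left, ← Finset.sum_sub_distrib]
    apply Finset.sum_congr rfl
    intro mm _
    rw [mip_smul_left, mipAB mm _ hEsym, mipAB mm _ hDDsym, mip_sub_right]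
    ring
  have eE : mip (U * Uᵀ - X) (D * Dᵀ) = mip (U * Uᵀ) (D * Dᵀ) - mip X (D * Dᵀ) :=
    mip_sub_left _ _ _
  rw [eA, eSec, eE]
  -- final assembly
  have shape : |(1 / 2) * (∑ m, mip (B m) (U * Dᵀ + D * Uᵀ) ^ 2) +
      (∑ m, mip (B m) (U * Uᵀ) * mip (B m) (D * Dᵀ)
        - ∑ m, mip (B m) X * mip (B m) (D * Dᵀ)) -
      (1 / 2) * frob (U * Dᵀ + D * Uᵀ) ^ 2
      - (mip (U * Uᵀ) (D * Dᵀ) - mip X (D * Dᵀ))|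
      = |(1/2) * (∑ m, mip (B m) (U * Dᵀ + D * Uᵀ) ^ 2 - frob (U * Dᵀ + D * Uᵀ) ^ 2)
        + (∑ m, mip (B m) (U * Uᵀ) * mip (B m) (D * Dᵀ) - mip (U * Uᵀ) (D * Dᵀ))
        - (∑ m, mip (B m) X * mip (B m) (D * Dᵀ) - mip X (D * Dᵀ))| := by
    exact congrArg abs (by ring)
  rw [shape]
  have hC : 0 < (16 / 7) * Real.sqrt k * L + (8 / 7) * L + frob X := by
    have : 0 ≤ (16 / 7) * Real.sqrt k * L := by positivity
    nlinarith
  have hδC : δ * ((16 / 7) * Real.sqrt k * L + (8 / 7) * L + frob X) ≤ η / 2 := by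
    rw [le_div_iff₀ (by linarith : (0:ℝ) < 2 * ((16 / 7) * Real.sqrt k * L
      + (8 / 7) * L + frob X))] at hδ
    linarith
  have tri : ∀ x y z : ℝ, |(1/2) * x + y - z| ≤ (1/2) * |x| + |y| + |z| := by
    intro x y z
    have a1 : |(1/2) * x + y - z| ≤ |(1/2) * x + y| + |z| := abs_sub _ _
    have a2 : |(1/2) * x + y| ≤ |(1/2) * x| + |y| := abs_add_le _ _
    have a3 : |(1/2 : ℝ) * x| = (1/2) * |x| := by
      rw [abs_mul, abs_of_pos (by norm_num : (0:ℝ) < 1/2)]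
    linarith
  calc |(1/2) * (∑ m, mip (B m) (U * Dᵀ + D * Uᵀ) ^ 2 - frob (U * Dᵀ + D * Uᵀ) ^ 2)
        + (∑ m, mip (B m) (U * Uᵀ) * mip (B m) (D * Dᵀ) - mip (U * Uᵀ) (D * Dᵀ))
        - (∑ m, mip (B m) X * mip (B m) (D * Dᵀ) - mip X (D * Dᵀ))|
      ≤ (1/2) * |∑ m, mip (B m) (U * Dᵀ + D * Uᵀ) ^ 2 - frob (U * Dᵀ + D * Uᵀ) ^ 2|
        + |∑ m, mip (B m) (U * Uᵀ) * mip (B m) (D * Dᵀ) - mip (U * Uᵀ) (D * Dᵀ)|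
        + |∑ m, mip (B m) X * mip (B m) (D * Dᵀ) - mip X (D * Dᵀ)| := tri _ _ _
    _ ≤ (1/2) * (δ * ((32/7) * (Real.sqrt k * L))) + δ * ((8/7) * L) + δ * frob X := by
        have hb1 : (1/2 : ℝ) * |∑ m, mip (B m) (U * Dᵀ + D * Uᵀ) ^ 2
            - frob (U * Dᵀ + D * Uᵀ) ^ 2| ≤ (1/2) * (δ * ((32/7) * (Real.sqrt k * L))) :=
          mul_le_mul_of_nonneg_left bound1 (by norm_num)
        exact add_le_add (add_le_add hb1 bound2) bound3
    _ = δ * ((16 / 7) * Real.sqrt k * L + (8 / 7) * L + frob X) := by ring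
    _ ≤ η / 2 := hδC
end

section
/- Let x* ∈ ℝ^N be nonzero and let x ∈ ℝ^N satisfy ‖x‖₂ ≤ (1/2)‖x*‖₂. Then, with v = x*/‖x*‖₂, the phase-retrieval population Hessian satisfies vᵀ∇²g(x)v = 12⟨x,v⟩² − 4‖x*‖₂² + 6‖x‖₂² − 2‖x*‖₂² ≤ −(3/2)‖x*‖₂²; in particular λ_min(∇²g(x)) ≤ −(3/2)‖x*‖₂². In particular x = 0 is a strict saddle point with λ_min(∇²g(0)) = −6‖x*‖₂². -/
open scoped RealInnerProductSpace

/-- The gradient of the phase-retrieval population risk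
`g(x) = ‖xxᵀ − x*x*ᵀ‖_F² + (1/2)(‖x‖² − ‖x*‖²)²`, namely
`∇g(x) = 6‖x‖²x − 2‖x*‖²x − 4(x*ᵀx)x*`. -/
noncomputable def gradPR {N : ℕ} (xs x : EuclideanSpace ℝ (Fin N)) :
    EuclideanSpace ℝ (Fin N) :=
  (6 * ‖x‖ ^ 2 - 2 * ‖xs‖ ^ 2) • x - (4 * ⟪xs, x⟫) • xs

/-- The smallest eigenvalue of the Hessian
`∇²g(x) = 12xxᵀ − 4x*x*ᵀ + (6‖x‖² − 2‖x*‖²)I` of the phase-retrieval population risk,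
given as the infimum of the Rayleigh quotient over the unit sphere. -/
noncomputable def lamMinHess {N : ℕ} (xs x : EuclideanSpace ℝ (Fin N)) : ℝ :=
  sInf {t : ℝ | ∃ v : EuclideanSpace ℝ (Fin N), ‖v‖ = 1 ∧
    t = 12 * ⟪x, v⟫ ^ 2 - 4 * ⟪xs, v⟫ ^ 2 + 6 * ‖x‖ ^ 2 - 2 * ‖xs‖ ^ 2}

lemma inner_sq_le {N : ℕ} (a v : EuclideanSpace ℝ (Fin N)) (hv : ‖v‖ = 1) :
    ⟪a, v⟫ ^ 2 ≤ ‖a‖ ^ 2 := by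
  have h := abs_real_inner_le_norm a v
  rw [hv, mul_one] at h
  calc ⟪a, v⟫ ^ 2 = |⟪a, v⟫| ^ 2 := (sq_abs _).symm
    _ ≤ ‖a‖ ^ 2 := by nlinarith [abs_nonneg ⟪a, v⟫]

theorem stmt_15 {N : ℕ} (xs x : EuclideanSpace ℝ (Fin N)) (hxs : xs ≠ 0)
    (hx : ‖x‖ ≤ (1 / 2) * ‖xs‖) :
    12 * ⟪x, ‖xs‖⁻¹ • xs⟫ ^ 2 - 4 * ‖xs‖ ^ 2 + 6 * ‖x‖ ^ 2 - 2 * ‖xs‖ ^ 2 ≤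
      -(3 / 2) * ‖xs‖ ^ 2 ∧
    lamMinHess xs x ≤ -(3 / 2) * ‖xs‖ ^ 2 ∧
    gradPR xs (0 : EuclideanSpace ℝ (Fin N)) = 0 ∧
    lamMinHess xs (0 : EuclideanSpace ℝ (Fin N)) = -6 * ‖xs‖ ^ 2 := by
  have hns : ‖xs‖ ≠ 0 := norm_ne_zero_iff.mpr hxs
  have hnpos : (0:ℝ) < ‖xs‖ := norm_pos_iff.mpr hxs
  set v : EuclideanSpace ℝ (Fin N) := ‖xs‖⁻¹ • xs with hv
  have hvnorm : ‖v‖ = 1 := by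
    rw [hv, norm_smul, norm_inv, norm_norm, inv_mul_cancel₀ hns]
  have hxv : ⟪x, v⟫ ^ 2 ≤ ‖x‖ ^ 2 := inner_sq_le x v hvnorm
  have hxsv : ⟪xs, v⟫ = ‖xs‖ := by
    rw [hv, real_inner_smul_right, real_inner_self_eq_norm_sq]
    field_simp
  have hxx : ‖x‖ ^ 2 ≤ (1/4) * ‖xs‖ ^ 2 := by
    nlinarith [norm_nonneg x, norm_nonneg xs]
  have h1 : 12 * ⟪x, v⟫ ^ 2 - 4 * ‖xs‖ ^ 2 + 6 * ‖x‖ ^ 2 - 2 * ‖xs‖ ^ 2 ≤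
      -(3 / 2) * ‖xs‖ ^ 2 := by nlinarith
  refine ⟨h1, ?_, ?_, ?_⟩
  · have hbdd : BddBelow {t : ℝ | ∃ w : EuclideanSpace ℝ (Fin N), ‖w‖ = 1 ∧
        t = 12 * ⟪x, w⟫ ^ 2 - 4 * ⟪xs, w⟫ ^ 2 + 6 * ‖x‖ ^ 2 - 2 * ‖xs‖ ^ 2} := by
      refine ⟨-4 * ‖xs‖ ^ 2 + 6 * ‖x‖ ^ 2 - 2 * ‖xs‖ ^ 2, ?_⟩
      rintro t ⟨w, hw, rfl⟩
      have h1 := inner_sq_le xs w hw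
      nlinarith [sq_nonneg ⟪x, w⟫]
    have hmem : (12 * ⟪x, v⟫ ^ 2 - 4 * ⟪xs, v⟫ ^ 2 + 6 * ‖x‖ ^ 2 - 2 * ‖xs‖ ^ 2) ∈
        {t : ℝ | ∃ w : EuclideanSpace ℝ (Fin N), ‖w‖ = 1 ∧
        t = 12 * ⟪x, w⟫ ^ 2 - 4 * ⟪xs, w⟫ ^ 2 + 6 * ‖x‖ ^ 2 - 2 * ‖xs‖ ^ 2} :=
      ⟨v, hvnorm, rfl⟩
    have := csInf_le hbdd hmem
    rw [hxsv] at this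
    exact le_trans this h1
  · simp [gradPR]
  · unfold lamMinHess
    apply le_antisymm
    · have hmem : (-6 * ‖xs‖ ^ 2) ∈
          {t : ℝ | ∃ w : EuclideanSpace ℝ (Fin N), ‖w‖ = 1 ∧
          t = 12 * ⟪(0:EuclideanSpace ℝ (Fin N)), w⟫ ^ 2 - 4 * ⟪xs, w⟫ ^ 2
            + 6 * ‖(0:EuclideanSpace ℝ (Fin N))‖ ^ 2 - 2 * ‖xs‖ ^ 2} := by
        refine ⟨v, hvnorm, ?_⟩
        simp [hxsv]
        ring
      have hbdd : BddBelow {t : ℝ | ∃ w : EuclideanSpace ℝ (Fin N), ‖w‖ = 1 ∧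
          t = 12 * ⟪(0:EuclideanSpace ℝ (Fin N)), w⟫ ^ 2 - 4 * ⟪xs, w⟫ ^ 2
            + 6 * ‖(0:EuclideanSpace ℝ (Fin N))‖ ^ 2 - 2 * ‖xs‖ ^ 2} := by
        refine ⟨-6 * ‖xs‖ ^ 2, ?_⟩
        rintro t ⟨w, hw, rfl⟩
        have h1 := inner_sq_le xs w hw
        simp only [inner_zero_left, norm_zero]
        nlinarith
      exact csInf_le hbdd hmem
    · apply le_csInf
      · exact ⟨_, v, hvnorm, rfl⟩
      · rintro t ⟨w, hw, rfl⟩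
        have h1 := inner_sq_le xs w hw
        simp only [inner_zero_left, norm_zero]
        nlinarith
end

section
/- Let x* ∈ ℝ^N be nonzero, let w ∈ ℝ^N satisfy wᵀx* = 0 and ‖w‖₂ = 1, and let x ∈ ℝ^N satisfy min over γ ∈ {1,−1} of ‖x − γ(1/√3)‖x*‖₂ w‖₂ ≤ (1/5)‖x*‖₂. Then, with v = x*/‖x*‖₂, vᵀ∇²g(x)v = 12⟨x,v⟩² − 4‖x*‖₂² + 6‖x‖₂² − 2‖x*‖₂² ≤ −0.78‖x*‖₂²; in particular λ_min(∇²g(x)) ≤ −0.78‖x*‖₂². In particular the points ±(1/√3)‖x*‖₂ w are strict saddle points of g with λ_min(∇²g(±(1/√3)‖x*‖₂ w)) = −4‖x*‖₂². -/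
open scoped RealInnerProductSpace

lemma aux_bdd {N : ℕ} (xs x : EuclideanSpace ℝ (Fin N)) :
    BddBelow {t : ℝ | ∃ v : EuclideanSpace ℝ (Fin N), ‖v‖ = 1 ∧
      t = 12 * ⟪x, v⟫ ^ 2 - 4 * ⟪xs, v⟫ ^ 2 + 6 * ‖x‖ ^ 2 - 2 * ‖xs‖ ^ 2} := by
  refine ⟨6 * ‖x‖ ^ 2 - 6 * ‖xs‖ ^ 2, ?_⟩
  rintro t ⟨v, hv, rfl⟩
  have hcs : |⟪xs, v⟫| ≤ ‖xs‖ := by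
    simpa [hv] using abs_real_inner_le_norm xs v
  have h2 : ⟪xs, v⟫ ^ 2 ≤ ‖xs‖ ^ 2 := by
    have := sq_abs ⟪xs, v⟫
    nlinarith [abs_nonneg ⟪xs, v⟫, norm_nonneg xs]
  nlinarith [sq_nonneg ⟪x, v⟫]

lemma aux_curv {N : ℕ} (xs x u : EuclideanSpace ℝ (Fin N)) (hr : 0 < ‖xs‖)
    (hu : ⟪u, xs⟫ = 0) (hun : ‖u‖ = (Real.sqrt 3)⁻¹ * ‖xs‖)
    (hx : ‖x - u‖ ≤ (1 / 5) * ‖xs‖) :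
    12 * ⟪x, ‖xs‖⁻¹ • xs⟫ ^ 2 - 4 * ‖xs‖ ^ 2 + 6 * ‖x‖ ^ 2 - 2 * ‖xs‖ ^ 2 ≤
      -0.78 * ‖xs‖ ^ 2 := by
  set r := ‖xs‖ with hrdef
  have hs3 : (0:ℝ) < Real.sqrt 3 := by positivity
  have hs3sq : Real.sqrt 3 ^ 2 = 3 := Real.sq_sqrt (by norm_num)
  have hub : ‖u‖ ≤ 0.6 * r := by
    rw [hun]; rw [inv_mul_le_iff₀ hs3] -- maybe name differs
    nlinarith
  -- inner product bound
  have hinner : ⟪x, xs⟫ = ⟪x - u, xs⟫ := by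
    rw [inner_sub_left, hu]; ring
  have habs : |⟪x, xs⟫| ≤ (1/5) * r * r := by
    rw [hinner]
    calc |⟪x - u, xs⟫| ≤ ‖x - u‖ * ‖xs‖ := abs_real_inner_le_norm _ _
      _ ≤ (1/5) * r * r := by
          apply mul_le_mul_of_nonneg_right hx (norm_nonneg xs)
  have ha : ⟪x, r⁻¹ • xs⟫ = r⁻¹ * ⟪x, xs⟫ := real_inner_smul_right x xs r⁻¹
  have ha2 : ⟪x, r⁻¹ • xs⟫ ^ 2 ≤ (1/25) * r ^ 2 := by
    rw [ha, mul_pow]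
    have : ⟪x, xs⟫ ^ 2 ≤ ((1/5) * r * r) ^ 2 := by
      have h0 := sq_abs ⟪x, xs⟫
      nlinarith [abs_nonneg ⟪x, xs⟫]
    have hrne : r ≠ 0 := ne_of_gt hr
    calc r⁻¹ ^ 2 * ⟪x, xs⟫ ^ 2 ≤ r⁻¹ ^ 2 * ((1/5) * r * r) ^ 2 := by
          apply mul_le_mul_of_nonneg_left this (by positivity)
      _ = (1/25) * r ^ 2 := by field_simp; ring
  have hnx : ‖x‖ ≤ (1/5) * r + 0.6 * r := by
    have hxe : (x - u) + u = x := by abel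
    calc ‖x‖ = ‖(x - u) + u‖ := by rw [hxe]
      _ ≤ ‖x - u‖ + ‖u‖ := norm_add_le _ _
      _ ≤ (1/5) * r + 0.6 * r := add_le_add hx hub
  nlinarith [norm_nonneg x, sq_nonneg ⟪x, r⁻¹ • xs⟫, mul_nonneg (norm_nonneg x) hr.le]

lemma aux_lam_eq {N : ℕ} (xs y : EuclideanSpace ℝ (Fin N)) (hr : 0 < ‖xs‖)
    (hy : ‖y‖ ^ 2 = ‖xs‖ ^ 2 / 3) (hyo : ⟪y, xs⟫ = 0) :
    lamMinHess xs y = -4 * ‖xs‖ ^ 2 := by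
  set r := ‖xs‖ with hrdef
  have hrne : r ≠ 0 := ne_of_gt hr
  have hvnorm : ‖r⁻¹ • xs‖ = 1 := by
    rw [norm_smul, norm_inv, norm_norm]; field_simp; exact div_self hrne
  have hxv : ⟪xs, r⁻¹ • xs⟫ = r := by
    rw [real_inner_smul_right, real_inner_self_eq_norm_sq]
    field_simp; ring
  have hyv : ⟪y, r⁻¹ • xs⟫ = 0 := by
    rw [real_inner_smul_right]
    rw [hyo]; ring
  apply le_antisymm
  · apply csInf_le (aux_bdd xs y)
    exact ⟨r⁻¹ • xs, hvnorm, by rw [hxv, hyv, hy]; ring⟩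
  · refine le_csInf ⟨_, ⟨r⁻¹ • xs, hvnorm, rfl⟩⟩ ?_
    rintro t ⟨v, hv, rfl⟩
    have hcs : |⟪xs, v⟫| ≤ r := by simpa [hv] using abs_real_inner_le_norm xs v
    have h2 : ⟪xs, v⟫ ^ 2 ≤ r ^ 2 := by
      have := sq_abs ⟪xs, v⟫
      nlinarith [abs_nonneg ⟪xs, v⟫]
    nlinarith [sq_nonneg ⟪y, v⟫]

theorem stmt_17 {N : ℕ} (xs x w : EuclideanSpace ℝ (Fin N)) (hxs : xs ≠ 0)
    (hw : ‖w‖ = 1) (hworth : ⟪w, xs⟫ = 0)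
    (c : ℝ) (hc : c = (Real.sqrt 3)⁻¹ * ‖xs‖)
    (hx : min ‖x - c • w‖ ‖x + c • w‖ ≤ (1 / 5) * ‖xs‖) :
    12 * ⟪x, ‖xs‖⁻¹ • xs⟫ ^ 2 - 4 * ‖xs‖ ^ 2 + 6 * ‖x‖ ^ 2 - 2 * ‖xs‖ ^ 2 ≤
      -0.78 * ‖xs‖ ^ 2 ∧
    lamMinHess xs x ≤ -0.78 * ‖xs‖ ^ 2 ∧
    gradPR xs (c • w) = 0 ∧ gradPR xs (-(c • w)) = 0 ∧
    lamMinHess xs (c • w) = -4 * ‖xs‖ ^ 2 ∧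
    lamMinHess xs (-(c • w)) = -4 * ‖xs‖ ^ 2 := by
  have hr : 0 < ‖xs‖ := norm_pos_iff.mpr hxs
  set r := ‖xs‖ with hrdef
  have hrne : r ≠ 0 := ne_of_gt hr
  have hs3 : (0:ℝ) < Real.sqrt 3 := by positivity
  have hs3sq : Real.sqrt 3 ^ 2 = 3 := Real.sq_sqrt (by norm_num)
  have hcpos : 0 < c := by rw [hc]; positivity
  have hnormcw : ‖c • w‖ = c := by
    rw [norm_smul, hw, Real.norm_eq_abs, abs_of_pos hcpos, mul_one]
  have hc2 : c ^ 2 = r ^ 2 / 3 := by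
    rw [hc, mul_pow, inv_pow, hs3sq]; ring
  have hcwxs : ⟪c • w, xs⟫ = 0 := by
    rw [real_inner_smul_left, hworth]; ring
  have hcwxs' : ⟪xs, c • w⟫ = 0 := by rw [real_inner_comm]; exact hcwxs
  -- part 1
  have part1 : 12 * ⟪x, r⁻¹ • xs⟫ ^ 2 - 4 * r ^ 2 + 6 * ‖x‖ ^ 2 - 2 * r ^ 2 ≤
      -0.78 * r ^ 2 := by
    rcases min_le_iff.mp hx with h | h
    · exact aux_curv xs x (c • w) hr hcwxs (by rw [hnormcw, hc]) h
    · refine aux_curv xs x (-(c • w)) hr ?_ ?_ ?_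
      · rw [inner_neg_left, hcwxs]; ring
      · rw [norm_neg, hnormcw, hc]
      · simpa [sub_neg_eq_add] using h
  refine ⟨part1, ?_, ?_, ?_, ?_, ?_⟩
  · -- lamMinHess xs x
    have hvnorm : ‖r⁻¹ • xs‖ = 1 := by
      rw [norm_smul, norm_inv, norm_norm]; field_simp
    have hxv : ⟪xs, r⁻¹ • xs⟫ = r := by
      rw [real_inner_smul_right, real_inner_self_eq_norm_sq]; field_simp; ring
    have hmem : 12 * ⟪x, r⁻¹ • xs⟫ ^ 2 - 4 * r ^ 2 + 6 * ‖x‖ ^ 2 - 2 * r ^ 2 ∈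
        {t : ℝ | ∃ v : EuclideanSpace ℝ (Fin N), ‖v‖ = 1 ∧
          t = 12 * ⟪x, v⟫ ^ 2 - 4 * ⟪xs, v⟫ ^ 2 + 6 * ‖x‖ ^ 2 - 2 * ‖xs‖ ^ 2} :=
      ⟨r⁻¹ • xs, hvnorm, by rw [hxv]⟩
    exact le_trans (csInf_le (aux_bdd xs x) hmem) part1
  · -- gradPR at c • w
    have : 6 * ‖c • w‖ ^ 2 - 2 * r ^ 2 = 0 := by
      rw [hnormcw, hc2]; ring
    rw [gradPR, this, hcwxs']
    simp
  · have : 6 * ‖-(c • w)‖ ^ 2 - 2 * r ^ 2 = 0 := by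
      rw [norm_neg, hnormcw, hc2]; ring
    rw [gradPR, this]
    rw [inner_neg_right, hcwxs']
    simp
  · exact aux_lam_eq xs (c • w) hr (by rw [hnormcw, hc2]) hcwxs
  · refine aux_lam_eq xs (-(c • w)) hr (by rw [norm_neg, hnormcw, hc2]) ?_
    rw [inner_neg_left, hcwxs]; ring
end

section
/- Let x* ∈ ℝ^N be nonzero and let x ∈ ℝ^N satisfy: ‖x‖₂ > (1/2)‖x*‖₂; min{‖x − x*‖₂, ‖x + x*‖₂} > (1/10)‖x*‖₂; and for every unit vector w ∈ ℝ^N with wᵀx* = 0 and every γ ∈ {1,−1}, ‖x − γ(1/√3)‖x*‖₂ w‖₂ > (1/5)‖x*‖₂. Then ‖∇g(x)‖₂ = ‖6‖x‖₂² x − 2‖x*‖₂² x − 4(x*ᵀx)x*‖₂ > 0.3963‖x*‖₂³. -/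
open scoped RealInnerProductSpace

set_option maxHeartbeats 1000000 in
private lemma scalar_main (u ρ : ℝ) (hu : 0 ≤ u) (hρ : 0 ≤ ρ)
    (hC1 : 1/4 < u^2+ρ^2)
    (hC2 : 1/100 < (u-1)^2+ρ^2)
    (hC3 : 4*ρ^2 < 3*(u^2+ρ^2+22/75)^2) :
    15705369/100000000 < 36*u^2*(u^2+ρ^2-1)^2 + (6*(u^2+ρ^2)-2)^2*ρ^2 := by
  rcases le_or_gt (19/20) u with hA | hu95
  · rcases le_or_gt (ρ^2) (144/10000) with hr | hrB
    · -- tight certificate case near (1,0)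
      have hC2' : (0:ℝ) ≤ (u-1)^2+ρ^2-1/100 := by linarith
      have hP : (0:ℝ) < 42109/2500 + (2109/25)*ρ^2 + 36*ρ^4 + (6054/25)*(u-1)
          + 216*(u-1)*ρ^2 + (11709/25)*(u-1)^2 + 72*(u-1)^2*ρ^2 + 216*(u-1)^3
          + 36*(u-1)^4 := by
        nlinarith [sq_nonneg (u-1), sq_nonneg ρ, sq_nonneg ((u-1)*ρ), sq_nonneg ((u-1)^2),
          sq_nonneg (ρ^2), mul_nonneg (sq_nonneg (u-1)) (sq_nonneg ρ), sq_nonneg ((u-1)+1/2)]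
      have hQ : (0:ℝ) < 192*(u-1+1/20)*(u-1+469/50000)^2
          + (370744/3125)*(u-1+7899897/842600000)^2 + 652935015641/5984375000000000 := by
        have h1 : (0:ℝ) ≤ 192*(u-1+1/20)*(u-1+469/50000)^2 :=
          mul_nonneg (by linarith) (sq_nonneg _)
        nlinarith [sq_nonneg (u-1+7899897/842600000)]
      have key : 36*u^2*(u^2+ρ^2-1)^2 + (6*(u^2+ρ^2)-2)^2*ρ^2 - 15705369/100000000
          = ((u-1)^2+ρ^2-1/100) * (42109/2500 + (2109/25)*ρ^2 + 36*ρ^4 + (6054/25)*(u-1)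
          + 216*(u-1)*ρ^2 + (11709/25)*(u-1)^2 + 72*(u-1)^2*ρ^2 + 216*(u-1)^3
          + 36*(u-1)^4)
          + (192*(u-1+1/20)*(u-1+469/50000)^2
          + (370744/3125)*(u-1+7899897/842600000)^2 + 652935015641/5984375000000000) := by
        ring
      nlinarith [mul_nonneg hC2' hP.le, hQ, key]
    · -- u ≥ 0.95, ρ² > 0.0144
      have hu2 : (9025:ℝ)/10000 ≤ u^2 := by nlinarith
      have h62 : (35014:ℝ)/10000 < 6*(u^2+ρ^2)-2 := by linarith
      have key : ((35014:ℝ)/10000)^2 * (144/10000) < (6*(u^2+ρ^2)-2)^2*ρ^2 := by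
        have h1 : ((35014:ℝ)/10000)^2 < (6*(u^2+ρ^2)-2)^2 := by nlinarith
        nlinarith [sq_nonneg (6*(u^2+ρ^2)-2)]
      nlinarith [key, mul_nonneg (sq_nonneg u) (sq_nonneg (u^2+ρ^2-1))]
  · rcases le_or_gt (ρ^2) (144/10000) with hr | hrB
    · -- u < 0.95, ρ small, S > 1/4
      have hS2 : u^2+ρ^2 ≤ 9169/10000 := by nlinarith
      have hu2 : (u^2+ρ^2) - 144/10000 ≤ u^2 := by linarith
      nlinarith [mul_nonneg (sq_nonneg (6*(u^2+ρ^2)-2)) (sq_nonneg ρ),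
        mul_nonneg (sub_nonneg.2 hS2) (sq_nonneg (u^2+ρ^2-1)),
        sq_nonneg (u^2+ρ^2-1), hC1, hu2,
        mul_nonneg (mul_nonneg (sub_nonneg.2 hS2) (sub_nonneg.2 hS2)) (sq_nonneg (u^2+ρ^2-1))]
    · rcases le_or_gt (93/100) (u^2+ρ^2) with hS | hS
      · -- S ≥ 0.93, ρ² > 0.0144
        have h62 : (358:ℝ)/100 ≤ 6*(u^2+ρ^2)-2 := by linarith
        have h1 : ((358:ℝ)/100)^2 ≤ (6*(u^2+ρ^2)-2)^2 := by nlinarith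
        nlinarith [mul_nonneg (sq_nonneg u) (sq_nonneg (u^2+ρ^2-1)), h1, hrB,
          sq_nonneg (6*(u^2+ρ^2)-2)]
      · rcases le_or_gt (1/2) u with hu5 | hu5
        · -- 1/2 ≤ u, S < 0.93, ρ² > 0.0144
          have hu2 : (1:ℝ)/4 ≤ u^2 := by nlinarith
          nlinarith [mul_nonneg (sub_nonneg.2 hu2) (sq_nonneg (u^2+ρ^2-1)),
            mul_nonneg (le_of_lt (by linarith : (0:ℝ) < ρ^2 - 144/10000))
              (sq_nonneg (6*(u^2+ρ^2)-2)),
            sq_nonneg (u^2+ρ^2-83/100), sq_nonneg (u^2+ρ^2-1)]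
        · rcases le_or_gt (u^2+ρ^2) (2/3) with hS23 | hS23
          · -- u < 1/2, 1/4 < S ≤ 2/3, uses C3
            have hGlin : 36*u^2*(u^2+ρ^2-1)^2 + (6*(u^2+ρ^2)-2)^2*ρ^2
                = (32-48*(u^2+ρ^2))*u^2 + (u^2+ρ^2)*(6*(u^2+ρ^2)-2)^2 := by ring
            have hcoef : (0:ℝ) ≤ 32-48*(u^2+ρ^2) := by linarith
            have hu2 : 4*u^2 > 4*(u^2+ρ^2) - 3*(u^2+ρ^2+22/75)^2 := by nlinarith
            rw [hGlin]
            nlinarith [mul_nonneg hcoef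
                (by linarith : (0:ℝ) ≤ 4*u^2 - (4*(u^2+ρ^2) - 3*(u^2+ρ^2+22/75)^2)),
              sq_nonneg (u^2+ρ^2-4127/10000), sq_nonneg (u^2+ρ^2-1/3), hC1, hS23,
              mul_nonneg (mul_nonneg hcoef hcoef) hcoef,
              mul_nonneg (sq_nonneg (u^2+ρ^2-4127/10000))
                (by linarith : (0:ℝ) ≤ 2/3-(u^2+ρ^2))]
          · -- u < 1/2, 2/3 < S < 0.93
            have hGlin : 36*u^2*(u^2+ρ^2-1)^2 + (6*(u^2+ρ^2)-2)^2*ρ^2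
                = (32-48*(u^2+ρ^2))*u^2 + (u^2+ρ^2)*(6*(u^2+ρ^2)-2)^2 := by ring
            have hu2 : u^2 ≤ 1/4 := by nlinarith
            rw [hGlin]
            nlinarith [mul_nonneg (by linarith : (0:ℝ) ≤ 48*(u^2+ρ^2)-32)
                (by linarith : (0:ℝ) ≤ 1/4 - u^2),
              sq_nonneg (u^2+ρ^2-2/3),
              mul_nonneg (sq_nonneg (u^2+ρ^2-2/3))
                (by linarith : (0:ℝ) ≤ u^2+ρ^2-2/3)]

set_option maxHeartbeats 1000000 in
theorem stmt_18 {N : ℕ} (xs x : EuclideanSpace ℝ (Fin N)) (hxs : xs ≠ 0)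
    (h1 : (1 / 2) * ‖xs‖ < ‖x‖)
    (h2 : (1 / 10) * ‖xs‖ < min ‖x - xs‖ ‖x + xs‖)
    (h3 : ∀ w : EuclideanSpace ℝ (Fin N), ‖w‖ = 1 → ⟪w, xs⟫ = 0 →
      (1 / 5) * ‖xs‖ < ‖x - ((Real.sqrt 3)⁻¹ * ‖xs‖) • w‖ ∧
      (1 / 5) * ‖xs‖ < ‖x + ((Real.sqrt 3)⁻¹ * ‖xs‖) • w‖) :
    0.3963 * ‖xs‖ ^ 3 < ‖gradPR xs x‖ := by
  have ha : 0 < ‖xs‖ := norm_pos_iff.2 hxs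
  have ha2 : 0 < ‖xs‖^2 := by positivity
  set c : ℝ := ⟪xs, x⟫ / ‖xs‖^2 with hc_def
  set p : EuclideanSpace ℝ (Fin N) := x - c • xs with hp_def
  have hxp : x = c • xs + p := by rw [hp_def]; abel
  have hinner : ⟪xs, x⟫ = c * ‖xs‖^2 := by
    rw [hc_def]; field_simp
  have hop : ⟪xs, p⟫ = 0 := by
    rw [hp_def, inner_sub_right, real_inner_smul_right, real_inner_self_eq_norm_sq, hinner]
    ring
  have hop' : ⟪p, xs⟫ = 0 := by rw [real_inner_comm]; exact hop
  have hdecomp : ∀ β γ : ℝ, ‖β • xs + γ • p‖^2 = β^2*‖xs‖^2 + γ^2*‖p‖^2 := by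
    intro β γ
    rw [norm_add_sq_real, real_inner_smul_left, real_inner_smul_right, hop]
    simp only [norm_smul, Real.norm_eq_abs, mul_pow, sq_abs, mul_zero, add_zero]
  set ρ : ℝ := ‖p‖ / ‖xs‖ with hρ_def
  have hρ0 : 0 ≤ ρ := div_nonneg (norm_nonneg _) (norm_nonneg _)
  have hpa : ‖p‖ = ρ * ‖xs‖ := by rw [hρ_def]; field_simp
  have hx2 : ‖x‖^2 = (c^2 + ρ^2)*‖xs‖^2 := by
    conv_lhs => rw [hxp]
    have h := hdecomp c 1
    simp only [one_smul, one_pow, one_mul] at h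
    rw [h, hpa]; ring
  have hu0 : 0 ≤ |c| := abs_nonneg c
  -- hypothesis C1
  have hsq : ∀ (b : ℝ) (v : EuclideanSpace ℝ (Fin N)), 0 ≤ b → b < ‖v‖ → b^2 < ‖v‖^2 := by
    intro b v hb h
    nlinarith [norm_nonneg v]
  have hC1 : 1/4 < |c|^2 + ρ^2 := by
    have h := hsq _ _ (by positivity) h1
    rw [hx2] at h
    rw [sq_abs]
    nlinarith
  -- hypothesis C2
  have hC2 : 1/100 < (|c|-1)^2 + ρ^2 := by
    rcases le_or_gt 0 c with hc | hc
    · rw [abs_of_nonneg hc]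
      have e1 : x - xs = (c-1) • xs + (1:ℝ) • p := by rw [hxp]; module
      have h2a := (lt_min_iff.mp h2).1
      have h := hsq _ _ (by positivity) h2a
      rw [e1, hdecomp, hpa] at h
      nlinarith
    · rw [abs_of_neg hc]
      have e1 : x + xs = (c+1) • xs + (1:ℝ) • p := by rw [hxp]; module
      have h2b := (lt_min_iff.mp h2).2
      have h := hsq _ _ (by positivity) h2b
      rw [e1, hdecomp, hpa] at h
      nlinarith
  -- hypothesis C3
  have hC3 : 4*ρ^2 < 3*(|c|^2+ρ^2+22/75)^2 := by
    by_cases hp : p = 0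
    · have : ρ = 0 := by rw [hρ_def, hp, norm_zero, zero_div]
      rw [this]
      have : (0:ℝ) < |c|^2+0^2+22/75 := by positivity
      nlinarith
    · have hpn : 0 < ‖p‖ := norm_pos_iff.2 hp
      have hρpos : 0 < ρ := by rw [hρ_def]; positivity
      set w : EuclideanSpace ℝ (Fin N) := ‖p‖⁻¹ • p with hw_def
      have hw : ‖w‖ = 1 := norm_smul_inv_norm hp
      have hwxs : ⟪w, xs⟫ = 0 := by
        rw [hw_def, real_inner_smul_left, hop', mul_zero]
      obtain ⟨h3a, _⟩ := h3 w hw hwxs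
      set q : ℝ := (Real.sqrt 3)⁻¹ with hq_def
      have hq2 : q^2 = 1/3 := by
        rw [hq_def, inv_pow, Real.sq_sqrt (by norm_num : (0:ℝ) ≤ 3)]
        norm_num
      have hqpos : 0 < q := by
        rw [hq_def]; positivity
      have e1 : x - (q * ‖xs‖) • w = c • xs + (1 - q * ‖xs‖ * ‖p‖⁻¹) • p := by
        rw [hxp, hw_def, smul_smul]; module
      have h := hsq _ _ (by positivity) h3a
      rw [e1, hdecomp] at h
      have e2 : (1 - q * ‖xs‖ * ‖p‖⁻¹)^2 * ‖p‖^2 = (ρ - q)^2 * ‖xs‖^2 := by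
        rw [hpa]
        field_simp
      rw [e2] at h
      have h' : 1/25 < c^2 + (ρ-q)^2 := by nlinarith
      have hE : 2*q*ρ < c^2+ρ^2+22/75 := by nlinarith
      have hE0 : 0 ≤ 2*q*ρ := by positivity
      have := mul_self_lt_mul_self hE0 hE
      rw [sq_abs]
      nlinarith
  have hscalar := scalar_main |c| ρ hu0 hρ0 hC1 hC2 hC3
  -- gradient decomposition
  have hgx : gradPR xs x = (6*‖x‖^2-2*‖xs‖^2) • x - (4*(c*‖xs‖^2)) • xs := by
    unfold gradPR
    rw [hinner]
  have hg : gradPR xs x = ((6*‖x‖^2-2*‖xs‖^2)*c - 4*(c*‖xs‖^2)) • xs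
      + (6*‖x‖^2-2*‖xs‖^2) • p := by
    rw [hgx]
    generalize (6*‖x‖^2-2*‖xs‖^2 : ℝ) = α
    conv_lhs => rw [hxp]
    module
  have hg2 : ‖gradPR xs x‖^2 = ((6*‖x‖^2-2*‖xs‖^2)*c - 4*(c*‖xs‖^2))^2*‖xs‖^2
      + (6*‖x‖^2-2*‖xs‖^2)^2*‖p‖^2 := by
    rw [hg, hdecomp]
  have hfinal : ‖gradPR xs x‖^2
      = (36*|c|^2*(|c|^2+ρ^2-1)^2 + (6*(|c|^2+ρ^2)-2)^2*ρ^2)*‖xs‖^6 := by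
    rw [sq_abs, hg2, hx2, hpa]
    ring
  have ha6 : (0:ℝ) < ‖xs‖^6 := by positivity
  have hB : (0.3963*‖xs‖^3)^2 < ‖gradPR xs x‖^2 := by
    rw [hfinal]
    nlinarith [mul_lt_mul_of_pos_right hscalar ha6]
  exact lt_of_pow_lt_pow_left₀ 2 (norm_nonneg _) hB
end
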